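/- Fix integers or reals $n \geq 3$, $m \geq 0$, and let $c(m,n) = \frac{m+n-1}{(m+n-2)^2}$. For $\tau > 0$ and $x_0 \in \mathbb{R}^n$, define $\varphi_{x_0,\tau}(x) = \tau^{-\frac{n(m+n-2)}{4(m+n)}}\left(1 + \frac{c(m,n)}{\tau}|x-x_0|^2\right)^{-\frac{m+n-2}{2}}$. Then $\varphi_{x_0,\tau}$ satisfies the PDE $-\tau^{\frac{m}{m+n}}\Delta \varphi_{x_0,\tau} + \frac{m(m+n-1)}{m+n-2}\tau^{-\frac{n}{2(m+n)}}\varphi_{x_0,\tau}^{\frac{m+n}{m+n-2}} = \frac{(m+n)(m+n-1)}{m+n-2}\varphi_{x_0,\tau}^{\frac{m+n+2}{m+n-2}}$ on $\mathbb{R}^n$. -/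

import Mathlib

open MeasureTheory

/-- The Euclidean Laplacian of `f : ℝⁿ → ℝ`, as a sum of second directional
derivatives along the standard basis. -/
noncomputable def euclLaplacian {n : ℕ} (f : EuclideanSpace ℝ (Fin n) → ℝ)
    (x : EuclideanSpace ℝ (Fin n)) : ℝ :=
  ∑ i : Fin n,
    fderiv ℝ (fun y => fderiv ℝ f y (EuclideanSpace.single i 1)) x
      (EuclideanSpace.single i 1)

/-- The standard bubble functions `φ_{x₀,τ}` solve the Yamabe-type PDE
`-τ^{m/(m+n)} Δφ + (m(m+n-1)/(m+n-2)) τ^{-n/(2(m+n))} φ^{(m+n)/(m+n-2)}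
  = ((m+n)(m+n-1)/(m+n-2)) φ^{(m+n+2)/(m+n-2)}` on `ℝⁿ`. -/
lemma lap_bubble {n : ℕ} (x₀ : EuclideanSpace ℝ (Fin n)) (A b p : ℝ) (hb : 0 ≤ b)
    (x : EuclideanSpace ℝ (Fin n)) :
    euclLaplacian (fun y => A * (1 + b * ‖y - x₀‖ ^ 2) ^ p) x
      = 2 * A * p * b * (2 * b * (p - 1) * (1 + b * ‖x - x₀‖ ^ 2) ^ (p - 2) * ‖x - x₀‖ ^ 2
          + n * (1 + b * ‖x - x₀‖ ^ 2) ^ (p - 1)) := by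
  have hu : ∀ y : EuclideanSpace ℝ (Fin n), (0:ℝ) < 1 + b * ‖y - x₀‖ ^ 2 := fun y => by positivity
  have hL : ∀ y : EuclideanSpace ℝ (Fin n),
      HasFDerivAt (fun z : EuclideanSpace ℝ (Fin n) => 1 + b * ‖z - x₀‖ ^ 2)
        (b • (2 • ((innerSL ℝ (y - x₀)).comp (ContinuousLinearMap.id ℝ _)))) y := fun y =>
    ((((hasFDerivAt_id y).sub_const x₀).norm_sq).const_mul b).const_add 1
  have hfd : ∀ (y : EuclideanSpace ℝ (Fin n)) (i : Fin n),
      fderiv ℝ (fun z => A * (1 + b * ‖z - x₀‖ ^ 2) ^ p) y (EuclideanSpace.single i 1)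
      = 2 * A * p * b * ((1 + b * ‖y - x₀‖ ^ 2) ^ (p - 1) * (y i - x₀ i)) := by
    intro y i
    rw [(((hL y).rpow_const (Or.inl (hu y).ne')).const_mul A).fderiv]
    simp [EuclideanSpace.inner_single_right, PiLp.sub_apply]
    ring
  have key : ∀ i : Fin n,
      fderiv ℝ (fun y => fderiv ℝ (fun z => A * (1 + b * ‖z - x₀‖ ^ 2) ^ p) y
        (EuclideanSpace.single i 1)) x (EuclideanSpace.single i 1)
      = 2 * A * p * b * ((1 + b * ‖x - x₀‖ ^ 2) ^ (p - 1))
        + 2 * A * p * b * ((p - 1) * (1 + b * ‖x - x₀‖ ^ 2) ^ (p - 2) * (2 * b))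
          * (x i - x₀ i) ^ 2 := by
    intro i
    have hg : (fun y : EuclideanSpace ℝ (Fin n) =>
        fderiv ℝ (fun z => A * (1 + b * ‖z - x₀‖ ^ 2) ^ p) y (EuclideanSpace.single i 1))
        = fun y => 2 * A * p * b * ((1 + b * ‖y - x₀‖ ^ 2) ^ (p - 1) * (y i - x₀ i)) :=
      funext fun y => hfd y i
    rw [hg]
    have h1 : HasFDerivAt (fun y : EuclideanSpace ℝ (Fin n) => (1 + b * ‖y - x₀‖ ^ 2) ^ (p - 1))
        (((p - 1) * (1 + b * ‖x - x₀‖ ^ 2) ^ (p - 1 - 1)) •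
          (b • (2 • ((innerSL ℝ (x - x₀)).comp (ContinuousLinearMap.id ℝ _))))) x :=
      (hL x).rpow_const (Or.inl (hu x).ne')
    have h2 : HasFDerivAt (fun y : EuclideanSpace ℝ (Fin n) => y i - x₀ i)
        (EuclideanSpace.proj (𝕜 := ℝ) i) x :=
      ((EuclideanSpace.proj (𝕜 := ℝ) i).hasFDerivAt).sub_const (x₀ i)
    have h12 : HasFDerivAt (fun y : EuclideanSpace ℝ (Fin n) => (1 + b * ‖y - x₀‖ ^ 2) ^ (p - 1) * (y i - x₀ i)) _ x := h1.mul h2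
    rw [(h12.const_mul (2 * A * p * b)).fderiv]
    simp [EuclideanSpace.inner_single_right, PiLp.sub_apply]
    ring
  unfold euclLaplacian
  rw [Finset.sum_congr rfl fun i _ => key i]
  rw [Finset.sum_add_distrib, Finset.sum_const, ← Finset.mul_sum]
  have hns : ∑ i, (x i - x₀ i) ^ 2 = ‖x - x₀‖ ^ 2 := by
    rw [EuclideanSpace.norm_eq, Real.sq_sqrt (by positivity)]
    exact Finset.sum_congr rfl fun i _ => by simp [PiLp.sub_apply, sq_abs]
  rw [hns]
  simp [Finset.card_univ]
  ring

theorem stmt11 (n : ℕ) (hn : 3 ≤ n) (m : ℝ) (hm : 0 ≤ m) (τ : ℝ) (hτ : 0 < τ)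
    (x₀ : EuclideanSpace ℝ (Fin n)) (c : ℝ) (hc : c = (m + n - 1) / (m + n - 2) ^ 2)
    (φ : EuclideanSpace ℝ (Fin n) → ℝ)
    (hφ : φ = fun x => τ ^ (-(n * (m + n - 2) / (4 * (m + n))))
      * (1 + c / τ * ‖x - x₀‖ ^ 2) ^ (-(m + n - 2) / 2)) :
    ∀ x : EuclideanSpace ℝ (Fin n),
      -τ ^ (m / (m + n)) * euclLaplacian φ x
        + m * (m + n - 1) / (m + n - 2) * τ ^ (-(n / (2 * (m + n))))
          * φ x ^ ((m + n) / (m + n - 2))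
      = (m + n) * (m + n - 1) / (m + n - 2) * φ x ^ ((m + n + 2) / (m + n - 2)) := by
  intro x
  have hn3 : (3:ℝ) ≤ (n:ℝ) := by exact_mod_cast hn
  have hk2 : (0:ℝ) < m + n - 2 := by linarith
  have hk : (0:ℝ) < m + n := by linarith
  have hk0 : (m + (n:ℝ)) ≠ 0 := hk.ne'
  have hk2' : (m + (n:ℝ) - 2) ≠ 0 := hk2.ne'
  have hc0 : 0 < c := by rw [hc]; exact div_pos (by linarith) (by positivity)
  have hb : 0 < c / τ := div_pos hc0 hτ
  set A := τ ^ (-(n * (m + n - 2) / (4 * (m + n)))) with hA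
  have hA0 : 0 < A := Real.rpow_pos_of_pos hτ _
  set p := -(m + (n:ℝ) - 2) / 2 with hp
  set r := ‖x - x₀‖ ^ 2 with hr
  have hr0 : (0:ℝ) ≤ r := by rw [hr]; positivity
  set s := 1 + c / τ * r with hs
  have hs0 : (0:ℝ) < s := by
    have := mul_nonneg hb.le hr0
    rw [hs]; linarith
  set E := -((n:ℝ) * (m + n - 2) / (4 * (m + n))) * ((m + n + 2) / (m + n - 2)) with hE
  have hφx : φ x = A * s ^ p := by rw [hφ]
  have hlap : euclLaplacian φ x
      = 2 * A * p * (c / τ) * (2 * (c / τ) * (p - 1) * s ^ (p - 2) * r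
        + n * s ^ (p - 1)) := by
    rw [hs, hr, hφ]
    exact lap_bubble x₀ A (c / τ) p hb.le x
  have hbr : c / τ * r = s - 1 := by rw [hs]; ring
  have hs1 : s ^ (p - 1) = s ^ (p - 2) * s := by
    rw [← Real.rpow_add_one hs0.ne' (p - 2)]
    ring_nf
  have e1a : m / (m + (n:ℝ)) + -((n:ℝ) * (m + n - 2) / (4 * (m + n))) + (-1:ℝ) = E := by
    rw [hE]; field_simp; ring
  have e2a : -((n:ℝ) / (2 * (m + n))) + -((n:ℝ) * (m + n - 2) / (4 * (m + n)))
      * ((m + n) / (m + n - 2)) = E := by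
    rw [hE]; field_simp; ring
  have e2b : p * ((m + (n:ℝ)) / (m + n - 2)) = p - 1 := by
    rw [hp]; field_simp; ring
  have e3b : p * ((m + (n:ℝ) + 2) / (m + n - 2)) = p - 2 := by
    rw [hp]; field_simp; ring
  have key1 : τ ^ (m / (m + (n:ℝ))) * A * (c / τ) = c * τ ^ E := by
    have hinv : c / τ = c * τ ^ (-1 : ℝ) := by rw [Real.rpow_neg_one]; ring
    calc τ ^ (m / (m + (n:ℝ))) * A * (c / τ)
        = c * (τ ^ (m / (m + (n:ℝ))) * τ ^ (-((n:ℝ) * (m + n - 2) / (4 * (m + n)))) * τ ^ (-1:ℝ)) := by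
          rw [hinv, hA]; ring
      _ = c * τ ^ (m / (m + (n:ℝ)) + -((n:ℝ) * (m + n - 2) / (4 * (m + n))) + (-1:ℝ)) := by
          rw [← Real.rpow_add hτ, ← Real.rpow_add hτ]
      _ = c * τ ^ E := by rw [e1a]
  have key2 : τ ^ (-((n:ℝ) / (2 * (m + n)))) * (A * s ^ p) ^ ((m + n) / (m + n - 2))
      = τ ^ E * s ^ (p - 1) := by
    rw [Real.mul_rpow hA0.le (Real.rpow_nonneg hs0.le _), hA,
      ← Real.rpow_mul hτ.le, ← Real.rpow_mul hs0.le, ← mul_assoc, ← Real.rpow_add hτ,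
      e2a, e2b]
  have key3 : (A * s ^ p) ^ ((m + n + 2) / (m + n - 2)) = τ ^ E * s ^ (p - 2) := by
    rw [Real.mul_rpow hA0.le (Real.rpow_nonneg hs0.le _), hA,
      ← Real.rpow_mul hτ.le, ← Real.rpow_mul hs0.le, e3b, ← hE]
  have hT1 : -τ ^ (m / (m + (n:ℝ))) * (2 * A * p * (c / τ)
        * (2 * (c / τ) * (p - 1) * s ^ (p - 2) * r + n * s ^ (p - 1)))
      = τ ^ E * s ^ (p - 2) * (-(2 * p * c) * (2 * (p - 1) * (s - 1) + n * s)) := by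
    calc -τ ^ (m / (m + (n:ℝ))) * (2 * A * p * (c / τ)
          * (2 * (c / τ) * (p - 1) * s ^ (p - 2) * r + n * s ^ (p - 1)))
        = (τ ^ (m / (m + (n:ℝ))) * A * (c / τ)) * (-(2 * p))
            * (2 * (p - 1) * s ^ (p - 2) * (c / τ * r) + n * s ^ (p - 1)) := by ring
      _ = (c * τ ^ E) * (-(2 * p))
            * (2 * (p - 1) * s ^ (p - 2) * (s - 1) + n * (s ^ (p - 2) * s)) := by
          rw [key1, hbr, hs1]
      _ = τ ^ E * s ^ (p - 2) * (-(2 * p * c) * (2 * (p - 1) * (s - 1) + n * s)) := by ring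
  have hpoly : -(2 * p * c) * (2 * (p - 1) * (s - 1) + n * s)
      + m * (m + n - 1) / (m + n - 2) * s = (m + n) * (m + n - 1) / (m + n - 2) := by
    rw [hp, hc]
    field_simp
    ring
  rw [hφx, hlap, hT1, mul_assoc (m * (m + ↑n - 1) / (m + ↑n - 2)), key2, key3, hs1]
  linear_combination (τ ^ E * s ^ (p - 2)) * hpoly
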